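/- Let {x_k}_{k=1}^K ⊆ ℝ^d with ‖x_k‖₂ ≤ L for all k, let λ > 0, and define Z_k = λI + ∑_{i=1}^{k−1} x_i x_iᵀ. Then ∑_{k=1}^K min{1, ‖x_k‖²_{Z_k⁻¹}} ≤ 2d log(1 + K L²/(dλ)). -/

import Mathlib

open Matrix Finset

lemma aux_min (u : ℝ) (hu : 0 ≤ u) : min 1 u ≤ 2 * Real.log (1 + u) := by
  rcases le_total u 1 with h | h
  · rw [min_eq_right h]
    have h1 : u / 2 ≤ u / (1 + u) :=
      div_le_div_of_nonneg_left hu (by linarith) (by linarith)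
    have h2 : 1 - (1 + u)⁻¹ ≤ Real.log (1 + u) :=
      Real.one_sub_inv_le_log_of_pos (by linarith)
    have h3 : u / (1 + u) = 1 - (1 + u)⁻¹ := by
      field_simp
      ring
    linarith
  · rw [min_eq_left h]
    have h2 : Real.log 2 ≤ Real.log (1 + u) :=
      Real.log_le_log (by norm_num) (by linarith)
    have := Real.log_two_gt_d9
    linarith

lemma aux_psd {d : ℕ} (v : Fin d → ℝ) : (vecMulVec v v).PosSemidef := by
  rw [posSemidef_iff_dotProduct_mulVec]
  constructor
  · ext i j; simp [vecMulVec_apply, mul_comm, conjTranspose_apply]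
  · intro y
    have : star y ⬝ᵥ (vecMulVec v v) *ᵥ y = (v ⬝ᵥ y) * (v ⬝ᵥ y) := by
      simp [dotProduct, mulVec, vecMulVec_apply, Finset.mul_sum, Finset.sum_mul]
      apply Finset.sum_congr rfl; intro i _
      apply Finset.sum_congr rfl; intro j _
      ring
    rw [this]
    exact mul_self_nonneg _

lemma aux_smul_one_posdef {d : ℕ} {lam : ℝ} (hlam : 0 < lam) :
    (lam • (1 : Matrix (Fin d) (Fin d) ℝ)).PosDef := by
  rw [posDef_iff_dotProduct_mulVec]
  constructor
  · ext i j
    simp only [conjTranspose_apply, Matrix.smul_apply, Matrix.one_apply, star_trivial]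
    by_cases h : j = i
    · simp [h]
    · rw [if_neg h, if_neg (fun hij => h hij.symm)]
  · intro y hy
    have : star y ⬝ᵥ (lam • (1 : Matrix (Fin d) (Fin d) ℝ)) *ᵥ y = lam * ∑ i, y i * y i := by
      simp [dotProduct, mulVec, Matrix.one_apply, Finset.mul_sum]
      apply Finset.sum_congr rfl; intro i _; ring
    rw [this]
    apply mul_pos hlam
    have h0 : ∀ i, 0 ≤ y i * y i := fun i => mul_self_nonneg _
    rcases Function.ne_iff.mp hy with ⟨i, hi⟩
    have : 0 < y i * y i := mul_self_pos.mpr hi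
    exact lt_of_lt_of_le this (Finset.single_le_sum (fun j _ => h0 j) (mem_univ i))

lemma aux_det {d : ℕ} {A : Matrix (Fin d) (Fin d) ℝ} (hA : A.PosDef) (v : Fin d → ℝ) :
    (A + vecMulVec v v).det = A.det * (1 + v ⬝ᵥ A⁻¹ *ᵥ v) := by
  have hs : ∀ i j, A⁻¹ i j = A⁻¹ j i := by
    intro i j
    conv_lhs => rw [← hA.1.inv.eq]
    simp [conjTranspose_apply]
  rw [vecMulVec_eq Unit, Matrix.det_add_replicateCol_mul_replicateRow hA.det_pos.ne'.isUnit]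
  congr 1
  rw [det_unique]
  simp only [Matrix.add_apply, Matrix.one_apply_eq]
  congr 1
  simp [Matrix.mul_apply, Matrix.replicateRow, Matrix.replicateCol, dotProduct, mulVec, Finset.mul_sum, mul_comm]
  apply Finset.sum_congr rfl; intro i _
  apply Finset.sum_congr rfl; intro j _
  rw [hs i j]

lemma aux_amgm {d : ℕ} (hd : 0 < d) {A : Matrix (Fin d) (Fin d) ℝ} (hA : A.PosSemidef) :
    A.det ≤ (A.trace / d) ^ d := by
  have hμ : ∀ i, 0 ≤ hA.1.eigenvalues i := hA.eigenvalues_nonneg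
  have hdet : A.det = ∏ i, hA.1.eigenvalues i := by
    have := hA.1.det_eq_prod_eigenvalues
    simpa using this
  have htr : A.trace = ∑ i, hA.1.eigenvalues i := by
    rw [hA.1.trace_eq_sum_eigenvalues]
    simp
  have hd' : (d : ℝ) ≠ 0 := Nat.cast_ne_zero.mpr hd.ne'
  have amgm := Real.geom_mean_le_arith_mean_weighted univ (fun _ => 1 / (d:ℝ)) hA.1.eigenvalues
    (fun i _ => by positivity) (by simp [Finset.sum_const]; field_simp) (fun i _ => hμ i)
  have hre : (∏ i, hA.1.eigenvalues i ^ (1/(d:ℝ) : ℝ)) ^ d = ∏ i, hA.1.eigenvalues i := by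
    rw [← Finset.prod_pow]
    apply Finset.prod_congr rfl
    intro i _
    rw [← Real.rpow_natCast (hA.1.eigenvalues i ^ (1/(d:ℝ))) d, ← Real.rpow_mul (hμ i)]
    field_simp
    simp
  have hsum : ∑ i, (1/(d:ℝ)) * hA.1.eigenvalues i = A.trace / d := by
    rw [htr, ← Finset.mul_sum]; ring
  rw [hdet, ← hre]
  apply pow_le_pow_left₀ (Finset.prod_nonneg (fun i _ => Real.rpow_nonneg (hμ i) _))
  rw [← hsum]
  exact amgm

theorem stmt_10 {d K : ℕ} (hd : 0 < d) (L lam : ℝ) (hlam : 0 < lam) (hL : 0 < L)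
    (x : Fin K → EuclideanSpace ℝ (Fin d)) (hx : ∀ k, ‖x k‖ ≤ L)
    (Z : Fin K → Matrix (Fin d) (Fin d) ℝ)
    (hZ : ∀ k, Z k = lam • (1 : Matrix (Fin d) (Fin d) ℝ) +
      ∑ i ∈ univ.filter (fun i => i < k), vecMulVec (x i) (x i)) :
    ∑ k, min 1 ((x k) ⬝ᵥ (Z k)⁻¹.mulVec (x k)) ≤
      2 * d * Real.log (1 + K * L ^ 2 / (d * lam)) := by
  set W : ℕ → Matrix (Fin d) (Fin d) ℝ := fun n =>
    lam • (1 : Matrix (Fin d) (Fin d) ℝ) +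
      ∑ i ∈ univ.filter (fun i : Fin K => (i : ℕ) < n), vecMulVec (x i) (x i) with hW
  have hd' : (d : ℝ) ≠ 0 := Nat.cast_ne_zero.mpr hd.ne'
  -- Z k = W k.val
  have hZW : ∀ k : Fin K, Z k = W k.val := by
    intro k
    rw [hZ k, hW]
    congr 2
  -- positivity of W n
  have hWpos : ∀ n, (W n).PosDef := by
    intro n
    apply (aux_smul_one_posdef hlam).add_posSemidef
    exact Finset.sum_induction _ _ (fun a b ha hb => ha.add hb) Matrix.PosSemidef.zero
      (fun i _ => aux_psd (x i))
  -- recurrence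
  have hstep : ∀ (k : Fin K), W (k.val + 1) = W k.val + vecMulVec (x k) (x k) := by
    intro k
    have hfil : univ.filter (fun i : Fin K => (i : ℕ) < k.val + 1) =
        insert k (univ.filter (fun i : Fin K => (i : ℕ) < k.val)) := by
      ext i
      simp only [mem_filter, mem_univ, true_and, mem_insert, Nat.lt_succ_iff_lt_or_eq]
      constructor
      · rintro (h | h)
        · exact Or.inr h
        · exact Or.inl (Fin.ext h)
      · rintro (h | h)
        · exact Or.inr (congrArg Fin.val h)
        · exact Or.inl h
    have hnm : k ∉ univ.filter (fun i : Fin K => (i : ℕ) < k.val) := by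
      simp
    simp only [hW]
    rw [hfil, Finset.sum_insert hnm]
    abel
  set u : Fin K → ℝ := fun k => (x k) ⬝ᵥ (Z k)⁻¹.mulVec (x k) with hu
  have hu0 : ∀ k, 0 ≤ u k := by
    intro k
    have h := ((hWpos k.val).inv).posSemidef.dotProduct_mulVec_nonneg (x k)
    rw [hu]
    simp only [hZW k]
    simpa using h
  set f : ℕ → ℝ := fun n => Real.log (W n).det with hf
  -- telescoping identity
  have hkey : ∀ k : Fin K, Real.log (1 + u k) = f (k.val + 1) - f k.val := by
    intro k
    have hdet : (W (k.val + 1)).det = (W k.val).det * (1 + u k) := by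
      rw [hstep k, aux_det (hWpos k.val)]
      congr 2
      rw [hu]
      simp only [hZW k]
    have h1 : (0:ℝ) < 1 + u k := by have := hu0 k; linarith
    rw [hf]
    simp only [hdet]
    rw [Real.log_mul (hWpos k.val).det_pos.ne' h1.ne']
    ring
  -- sum of logs telescopes
  have hsumlog : ∑ k : Fin K, Real.log (1 + u k) = f K - f 0 := by
    calc ∑ k : Fin K, Real.log (1 + u k) = ∑ k : Fin K, (f (k.val + 1) - f k.val) :=
          Finset.sum_congr rfl (fun k _ => hkey k)
      _ = ∑ n ∈ range K, (f (n + 1) - f n) :=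
          Fin.sum_univ_eq_sum_range (fun n => f (n + 1) - f n) K
      _ = f K - f 0 := Finset.sum_range_sub f K
  -- f 0 = d * log lam
  have hf0 : f 0 = d * Real.log lam := by
    have hW0 : W 0 = lam • (1 : Matrix (Fin d) (Fin d) ℝ) := by
      simp [hW]
    rw [hf]
    simp only [hW0]
    rw [Matrix.det_smul, det_one, mul_one, Fintype.card_fin,
      Real.log_pow]
  -- trace bound
  have htrace : (W K).trace ≤ d * lam + K * L ^ 2 := by
    have h1 : (W K).trace = lam * d +
        ∑ i ∈ univ.filter (fun i : Fin K => (i : ℕ) < K), (vecMulVec (x i) (x i)).trace := by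
      simp [hW, Matrix.trace_add, Matrix.trace_smul, Matrix.trace_one, trace_sum]
    have h2 : ∀ i : Fin K, (vecMulVec (x i) (x i)).trace ≤ L ^ 2 := by
      intro i
      have hnorm : (vecMulVec (x i) (x i)).trace = ‖x i‖ ^ 2 := by
        rw [Matrix.trace]
        have := EuclideanSpace.norm_eq (x i)
        rw [this, Real.sq_sqrt (by positivity)]
        apply Finset.sum_congr rfl
        intro j _
        simp [Matrix.diag, vecMulVec_apply, sq, Real.norm_eq_abs, abs_mul_abs_self]
      rw [hnorm]
      have := hx i
      have h0 : 0 ≤ ‖x i‖ := norm_nonneg _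
      nlinarith
    have h3 : ∑ i ∈ univ.filter (fun i : Fin K => (i : ℕ) < K), (vecMulVec (x i) (x i)).trace
        ≤ ∑ _i ∈ univ.filter (fun i : Fin K => (i : ℕ) < K), L ^ 2 :=
      Finset.sum_le_sum (fun i _ => h2 i)
    have h4 : (univ.filter (fun i : Fin K => (i : ℕ) < K)).card ≤ K := by
      calc (univ.filter (fun i : Fin K => (i : ℕ) < K)).card ≤ (univ : Finset (Fin K)).card :=
            Finset.card_filter_le _ _
        _ = K := by simp
    have h5 : ∑ _i ∈ univ.filter (fun i : Fin K => (i : ℕ) < K), L ^ 2 ≤ K * L ^ 2 := by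
      rw [Finset.sum_const, nsmul_eq_mul]
      have : ((univ.filter (fun i : Fin K => (i : ℕ) < K)).card : ℝ) ≤ K := by
        exact_mod_cast h4
      nlinarith [sq_nonneg L]
    calc (W K).trace = lam * d + _ := h1
      _ ≤ lam * d + K * L ^ 2 := by linarith
      _ = d * lam + K * L ^ 2 := by ring
  -- bound on f K
  have hb : (0:ℝ) < lam + K * L ^ 2 / d := by positivity
  have hfK : f K ≤ d * Real.log (lam + K * L ^ 2 / d) := by
    have h1 : (W K).det ≤ ((W K).trace / d) ^ d := aux_amgm hd (hWpos K).posSemidef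
    have h2 : (W K).trace / d ≤ lam + K * L ^ 2 / d := by
      rw [div_le_iff₀ (by positivity : (0:ℝ) < (d:ℝ))]
      calc (W K).trace ≤ d * lam + K * L ^ 2 := htrace
        _ = (lam + K * L ^ 2 / d) * d := by field_simp
    have h3 : (W K).det ≤ (lam + K * L ^ 2 / d) ^ d := by
      calc (W K).det ≤ ((W K).trace / d) ^ d := h1
        _ ≤ (lam + K * L ^ 2 / d) ^ d := by
            apply pow_le_pow_left₀ _ h2
            have htr1 : 0 ≤ (W K).trace := by
              have hsum := aux_amgm hd (hWpos K).posSemidef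
              have heig : (W K).trace = ∑ i, ((hWpos K).posSemidef).1.eigenvalues i := by
                rw [((hWpos K).posSemidef).1.trace_eq_sum_eigenvalues]
                simp
              rw [heig]
              exact Finset.sum_nonneg (fun i _ => (hWpos K).posSemidef.eigenvalues_nonneg i)
            positivity
    rw [hf]
    calc Real.log (W K).det ≤ Real.log ((lam + K * L ^ 2 / d) ^ d) :=
          Real.log_le_log (hWpos K).det_pos h3
      _ = d * Real.log (lam + K * L ^ 2 / d) := by rw [Real.log_pow]
  -- put it together
  have hmain : ∑ k, min 1 (u k) ≤ 2 * (f K - f 0) := by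
    calc ∑ k, min 1 (u k) ≤ ∑ k, 2 * Real.log (1 + u k) :=
          Finset.sum_le_sum (fun k _ => aux_min (u k) (hu0 k))
      _ = 2 * ∑ k, Real.log (1 + u k) := by rw [Finset.mul_sum]
      _ = 2 * (f K - f 0) := by rw [hsumlog]
  have hlogeq : Real.log (lam + K * L ^ 2 / d) - Real.log lam =
      Real.log (1 + K * L ^ 2 / (d * lam)) := by
    rw [← Real.log_div hb.ne' hlam.ne']
    congr 1
    field_simp
  calc ∑ k, min 1 (u k) ≤ 2 * (f K - f 0) := hmain
    _ ≤ 2 * (d * Real.log (lam + K * L ^ 2 / d) - d * Real.log lam) := by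
        rw [hf0]; linarith
    _ = 2 * d * (Real.log (lam + K * L ^ 2 / d) - Real.log lam) := by ring
    _ = 2 * d * Real.log (1 + K * L ^ 2 / (d * lam)) := by rw [hlogeq]
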